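/- The functions u₁(ξ,τ) = 1 − (1/4)ξ²τ² and u₂(ξ,τ) = 1 − (1/2)(ξ² + τ²), defined for all (ξ,τ) ∈ ℝ², satisfy the spacetime wave map system ∂²u₁/∂τ² − ∂²u₁/∂ξ² = (1/(2u₁))((∂u₁/∂τ)² + (∂u₂/∂τ)² − (∂u₁/∂ξ)² − (∂u₂/∂ξ)²) and ∂²u₂/∂τ² − ∂²u₂/∂ξ² = (1/u₁)((∂u₁/∂τ)(∂u₂/∂τ) − (∂u₁/∂ξ)(∂u₂/∂ξ)) at every point with u₁(ξ,τ) ≠ 0, together with the initial conditions u₁(ξ,0) = 1, u₂(ξ,0) = 1 − (1/2)ξ², ∂u₁/∂τ(ξ,0) = 0, ∂u₂/∂τ(ξ,0) = 0 for all ξ ∈ ℝ. -/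

import Mathlib

/-- Partial derivative with respect to the first variable `ξ`. -/
noncomputable def pdXi (f : ℝ × ℝ → ℝ) (p : ℝ × ℝ) : ℝ :=
  deriv (fun x => f (x, p.2)) p.1

/-- Partial derivative with respect to the second variable `τ`. -/
noncomputable def pdTau (f : ℝ × ℝ → ℝ) (p : ℝ × ℝ) : ℝ :=
  deriv (fun t => f (p.1, t)) p.2

/-- The globally defined spacetime solution `u₁` of Example 4.2; `p = (ξ, τ)`. -/
noncomputable def U1 : ℝ × ℝ → ℝ := fun p => 1 - (1 / 4) * p.1 ^ 2 * p.2 ^ 2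

/-- The globally defined spacetime solution `u₂` of Example 4.2; `p = (ξ, τ)`. -/
noncomputable def U2 : ℝ × ℝ → ℝ := fun p => 1 - (1 / 2) * (p.1 ^ 2 + p.2 ^ 2)

lemma deriv_quad (a b : ℝ) : deriv (fun x : ℝ => a - b * x ^ 2) = fun x => -(2 * b * x) := by
  funext x
  have h : HasDerivAt (fun x : ℝ => a - b * x ^ 2) (-(2 * b * x)) x := by
    have := ((hasDerivAt_pow 2 x).const_mul b).const_sub a
    simpa [mul_comm, mul_assoc, mul_left_comm] using this
  exact h.deriv

lemma pdXi_U1 : pdXi U1 = fun p => -(1 / 2 * p.2 ^ 2 * p.1) := by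
  funext p
  have : (fun x : ℝ => U1 (x, p.2)) = fun x => 1 - (1 / 4 * p.2 ^ 2) * x ^ 2 := by
    funext x; simp only [U1]; ring
  simp only [pdXi, this, deriv_quad]; ring

lemma pdTau_U1 : pdTau U1 = fun p => -(1 / 2 * p.1 ^ 2 * p.2) := by
  funext p
  have : (fun t : ℝ => U1 (p.1, t)) = fun t => 1 - (1 / 4 * p.1 ^ 2) * t ^ 2 := by
    funext t; simp only [U1]
  simp only [pdTau, this, deriv_quad]; ring

lemma pdXi_U2 : pdXi U2 = fun p => -p.1 := by
  funext p
  have : (fun x : ℝ => U2 (x, p.2)) = fun x => (1 - 1 / 2 * p.2 ^ 2) - (1 / 2) * x ^ 2 := by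
    funext x; simp only [U2]; ring
  simp only [pdXi, this, deriv_quad]; ring

lemma pdTau_U2 : pdTau U2 = fun p => -p.2 := by
  funext p
  have : (fun t : ℝ => U2 (p.1, t)) = fun t => (1 - 1 / 2 * p.1 ^ 2) - (1 / 2) * t ^ 2 := by
    funext t; simp only [U2]; ring
  simp only [pdTau, this, deriv_quad]; ring

lemma deriv_lin (a : ℝ) : deriv (fun x : ℝ => -(a * x)) = fun _ => -a := by
  funext x
  have h : HasDerivAt (fun x : ℝ => -(a * x)) (-a) x := by
    simpa [Pi.neg_def] using ((hasDerivAt_id x).const_mul a).neg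
  exact h.deriv

lemma pdXi_pdXi_U1 (p : ℝ × ℝ) : pdXi (pdXi U1) p = -(1 / 2 * p.2 ^ 2) := by
  have : (fun x : ℝ => pdXi U1 (x, p.2)) = fun x => -((1 / 2 * p.2 ^ 2) * x) := by
    funext x; rw [pdXi_U1]
  rw [pdXi, this, deriv_lin]

lemma pdTau_pdTau_U1 (p : ℝ × ℝ) : pdTau (pdTau U1) p = -(1 / 2 * p.1 ^ 2) := by
  have : (fun t : ℝ => pdTau U1 (p.1, t)) = fun t => -((1 / 2 * p.1 ^ 2) * t) := by
    funext t; rw [pdTau_U1]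
  rw [pdTau, this, deriv_lin]

lemma pdXi_pdXi_U2 (p : ℝ × ℝ) : pdXi (pdXi U2) p = -1 := by
  have : (fun x : ℝ => pdXi U2 (x, p.2)) = fun x => -(1 * x) := by
    funext x; rw [pdXi_U2]; simp
  rw [pdXi, this, deriv_lin]

lemma pdTau_pdTau_U2 (p : ℝ × ℝ) : pdTau (pdTau U2) p = -1 := by
  have : (fun t : ℝ => pdTau U2 (p.1, t)) = fun t => -(1 * t) := by
    funext t; rw [pdTau_U2]; simp
  rw [pdTau, this, deriv_lin]

/-- the globally defined pair `(U1, U2)` of Example 4.2 satisfies the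
spacetime wave map system at every point where `U1 ≠ 0`, together with the initial
conditions `u₁(ξ,0) = 1`, `u₂(ξ,0) = 1 − ξ²/2` and vanishing initial `τ`-derivatives. -/
theorem example42_global_solution :
    (∀ p : ℝ × ℝ, U1 p ≠ 0 →
      pdTau (pdTau U1) p - pdXi (pdXi U1) p =
        (1 / (2 * U1 p)) *
          ((pdTau U1 p) ^ 2 + (pdTau U2 p) ^ 2 - (pdXi U1 p) ^ 2 - (pdXi U2 p) ^ 2) ∧
      pdTau (pdTau U2) p - pdXi (pdXi U2) p =
        (1 / U1 p) * (pdTau U1 p * pdTau U2 p - pdXi U1 p * pdXi U2 p)) ∧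
    (∀ ξ : ℝ,
      U1 (ξ, 0) = 1 ∧ U2 (ξ, 0) = 1 - (1 / 2) * ξ ^ 2 ∧
      pdTau U1 (ξ, 0) = 0 ∧ pdTau U2 (ξ, 0) = 0) := by
  constructor
  · intro p hp
    rw [pdXi_pdXi_U1, pdTau_pdTau_U1, pdXi_pdXi_U2, pdTau_pdTau_U2,
      pdXi_U1, pdTau_U1, pdXi_U2, pdTau_U2]
    have hU : (2 : ℝ) * U1 p ≠ 0 := mul_ne_zero two_ne_zero hp
    constructor
    · rw [one_div (2 * U1 p), inv_mul_eq_div, eq_div_iff hU]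
      simp only [U1]
      ring
    · rw [one_div (U1 p), inv_mul_eq_div, eq_div_iff hp]
      simp only [U1]
      ring
  · intro ξ
    refine ⟨by simp [U1], by simp [U2], ?_, ?_⟩ <;> simp [pdTau_U1, pdTau_U2]
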